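/- Let γ > 1 and let q : (0,∞) → (0,∞) be non-increasing such that x^{(1−γ)/2}·|log x| = O(q(x)) as x ↓ 0, i.e., there exist C > 0 and δ ∈ (0,1) with q(x) ≥ C·x^{(1−γ)/2}·|log x| for all x ∈ (0,δ). Define q⟵(v) := inf{x > 0 : q(x) ≤ v}. Then (v/log v)^{2/(1−γ)} = O(q⟵(v)) as v → ∞, i.e., there exist C' > 0 and v₀ > 1 with q⟵(v) ≥ C'·(v/log v)^{2/(1−γ)} for all v ≥ v₀. Consequently, ∫_{y₀}^∞ (q⟵(v))^{1−γ}·v^{−3} dv < ∞ for every y₀ > 1. -/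

import Mathlib

open MeasureTheory Set
open scoped ENNReal NNReal

private lemma log_le_half {u : ℝ} (hu : 0 < u) : Real.log u ≤ u / 2 := by
  have hs := Real.sq_sqrt hu.le
  have h1 : Real.log (Real.sqrt u) ≤ Real.sqrt u - 1 :=
    Real.log_le_sub_one_of_pos (Real.sqrt_pos.2 hu)
  have h2 : Real.log (Real.sqrt u) = Real.log u / 2 := Real.log_sqrt hu.le
  nlinarith [sq_nonneg (Real.sqrt u - 2)]

private lemma key_lower_bound (γ : ℝ) (hγ : 1 < γ) (q : ℝ → ℝ)
    (hQ2 : ∃ C : ℝ, 0 < C ∧ ∃ δ ∈ Set.Ioo (0 : ℝ) 1, ∀ x ∈ Set.Ioo (0 : ℝ) δ,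
      C * x ^ ((1 - γ) / 2) * |Real.log x| ≤ q x) :
    ∃ C' : ℝ, 0 < C' ∧ ∃ v₀ : ℝ, 1 < v₀ ∧ ∀ v : ℝ, v₀ ≤ v →
      0 < C' * (v / Real.log v) ^ (2 / (1 - γ)) ∧
      (∃ y : ℝ, 0 < y ∧ q y ≤ v) ∧
      ∀ x : ℝ, 0 < x → q x ≤ v → C' * (v / Real.log v) ^ (2 / (1 - γ)) ≤ x := by
  obtain ⟨C, hC, δ, ⟨hδ0, hδ1⟩, hb⟩ := hQ2
  obtain ⟨p, hpdef⟩ : ∃ p : ℝ, p = (1 - γ) / 2 := ⟨_, rfl⟩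
  rw [← hpdef] at hb
  have hp : p < 0 := by rw [hpdef]; linarith
  have hexp : 2 / (1 - γ) = 1 / p := by rw [hpdef]; exact (one_div_div (1 - γ) 2).symm
  have hBpos : 0 < (-2 * p) / C := div_pos (by linarith) hC
  obtain ⟨C', hC'def⟩ : ∃ c : ℝ, c = min 1 (((-2 * p) / C) ^ (1 / p)) := ⟨_, rfl⟩
  have hC'pos : 0 < C' := hC'def ▸ lt_min one_pos (Real.rpow_pos_of_pos hBpos _)
  have hC'le1 : C' ≤ 1 := hC'def ▸ min_le_left _ _
  have hC'p : (-2 * p) / C ≤ C' ^ p := by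
    have hle : C' ≤ ((-2 * p) / C) ^ (1 / p) := hC'def ▸ min_le_right _ _
    have h := Real.rpow_le_rpow_of_nonpos hC'pos hle hp.le
    rwa [← Real.rpow_mul hBpos.le, one_div, inv_mul_cancel₀ hp.ne, Real.rpow_one] at h
  obtain ⟨V, hVdef⟩ : ∃ V : ℝ, V = (2 * (δ / C') ^ p) ^ 2 := ⟨_, rfl⟩
  have hexp1 : (1 : ℝ) < Real.exp 1 := by
    have := Real.exp_one_gt_d9; linarith
  have hv₀1 : 1 < max (max (q 1) (Real.exp 1)) V :=
    lt_of_lt_of_le hexp1 (le_trans (le_max_right _ _) (le_max_left _ _))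
  refine ⟨C', hC'pos, _, hv₀1, fun v hv => ?_⟩
  have hv1 : 1 < v := lt_of_lt_of_le hv₀1 hv
  have hv0 : 0 < v := by linarith
  have hlv : 1 ≤ Real.log v := by
    have hev : Real.exp 1 ≤ v :=
      le_trans (le_trans (le_max_right _ _) (le_max_left _ _)) hv
    calc (1 : ℝ) = Real.log (Real.exp 1) := (Real.log_exp 1).symm
      _ ≤ Real.log v := Real.log_le_log (Real.exp_pos 1) hev
  have hL : 0 < Real.log v := lt_of_lt_of_le one_pos hlv
  obtain ⟨X, hXdef⟩ : ∃ X : ℝ, X = v / Real.log v := ⟨_, rfl⟩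
  have hX : 0 < X := hXdef ▸ div_pos hv0 hL
  obtain ⟨t, htdef⟩ : ∃ t : ℝ, t = C' * X ^ (1 / p) := ⟨_, rfl⟩
  have ht0 : 0 < t := htdef ▸ mul_pos hC'pos (Real.rpow_pos_of_pos hX _)
  -- t ≤ δ
  have hsq : Real.sqrt v / 2 ≤ X := by
    have hsqv := Real.sqrt_pos.2 hv0
    have h1 : Real.log (Real.sqrt v) ≤ Real.sqrt v - 1 :=
      Real.log_le_sub_one_of_pos hsqv
    have h2 : Real.log (Real.sqrt v) = Real.log v / 2 := Real.log_sqrt hv0.le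
    rw [hXdef, div_le_div_iff₀ (by norm_num : (0:ℝ) < 2) hL]
    nlinarith [Real.sq_sqrt hv0.le]
  have hδC' : 0 < δ / C' := div_pos hδ0 hC'pos
  have htδ : t ≤ δ := by
    have hVle : V ≤ v := le_trans (le_max_right _ _) hv
    have h2p : (0 : ℝ) < 2 * (δ / C') ^ p := by
      have := Real.rpow_pos_of_pos hδC' p; linarith
    have hsqV : 2 * (δ / C') ^ p ≤ Real.sqrt v := by
      have hVs : Real.sqrt V = 2 * (δ / C') ^ p := by
        rw [hVdef, Real.sqrt_sq h2p.le]
      calc 2 * (δ / C') ^ p = Real.sqrt V := hVs.symm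
        _ ≤ Real.sqrt v := Real.sqrt_le_sqrt hVle
    have hXge : (δ / C') ^ p ≤ X := by linarith
    have h1 : X ^ (1 / p) ≤ ((δ / C') ^ p) ^ (1 / p) :=
      Real.rpow_le_rpow_of_nonpos (Real.rpow_pos_of_pos hδC' p) hXge
        (le_of_lt (by rw [one_div]; exact inv_neg''.2 hp))
    have h2 : ((δ / C') ^ p) ^ (1 / p) = δ / C' := by
      rw [← Real.rpow_mul hδC'.le, mul_one_div, div_self hp.ne, Real.rpow_one]
    calc t = C' * X ^ (1 / p) := htdef
      _ ≤ C' * (δ / C') := mul_le_mul_of_nonneg_left (h1.trans_eq h2) hC'pos.le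
      _ = δ := by field_simp
  have ht1 : t < 1 := lt_of_le_of_lt htδ hδ1
  refine ⟨by rw [hexp, ← hXdef, ← htdef]; exact ht0,
    ⟨1, one_pos, le_trans (le_trans (le_max_left _ _) (le_max_left _ _)) hv⟩, ?_⟩
  intro x hx hqx
  rw [hexp, ← hXdef, ← htdef]
  by_contra hcon
  push_neg at hcon
  have hxδ : x < δ := lt_of_lt_of_le hcon htδ
  have hx1 : x < 1 := lt_trans hcon ht1
  have hbx := hb x ⟨hx, hxδ⟩
  rw [abs_of_neg (Real.log_neg hx hx1)] at hbx
  have hlt : Real.log t < 0 := Real.log_neg ht0 ht1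
  have htp : t ^ p = C' ^ p * X := by
    rw [htdef, Real.mul_rpow hC'pos.le (Real.rpow_pos_of_pos hX _).le,
      ← Real.rpow_mul hX.le, one_div, inv_mul_cancel₀ hp.ne, Real.rpow_one]
  have hlogt : Real.log t = Real.log C' + (1 / p) * (Real.log v - Real.log (Real.log v)) := by
    rw [htdef, Real.log_mul hC'pos.ne' (Real.rpow_pos_of_pos hX _).ne',
      Real.log_rpow hX, hXdef, Real.log_div hv0.ne' hL.ne']
  have hloglog : Real.log (Real.log v) ≤ Real.log v / 2 := log_le_half hL
  have hlogC' : Real.log C' ≤ 0 := Real.log_nonpos hC'pos.le hC'le1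
  have hinvp : 0 < -(1 / p) := by
    rw [one_div]; have := inv_neg''.2 hp; linarith
  have htppos : 0 < t ^ p := Real.rpow_pos_of_pos ht0 p
  have hmain : v ≤ C * t ^ p * (-Real.log t) := by
    have h2 : Real.log v / 2 ≤ Real.log v - Real.log (Real.log v) := by linarith
    have h4 := mul_le_mul_of_nonneg_left h2 hinvp.le
    have h1 : -(1 / p) * (Real.log v / 2) ≤ -Real.log t := by
      rw [hlogt]; nlinarith
    have h5 : C * t ^ p * (-(1 / p) * (Real.log v / 2)) ≤ C * t ^ p * (-Real.log t) :=
      mul_le_mul_of_nonneg_left h1 (by positivity)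
    have h7 : X * Real.log v = v := by rw [hXdef]; exact div_mul_cancel₀ _ hL.ne'
    have h6 : C * t ^ p * (-(1 / p) * (Real.log v / 2)) =
        (C * C' ^ p * (-(1 / p) / 2)) * (X * Real.log v) := by
      rw [htp]; ring
    have h8 : 1 ≤ C * C' ^ p * (-(1 / p) / 2) := by
      have h9 : -2 * p ≤ C' ^ p * C := (div_le_iff₀ hC).1 hC'p
      have h10 : 0 < -(1 / p) / 2 := by linarith
      have hpne : p ≠ 0 := hp.ne
      have h11 : (-2 * p) * (-(1 / p) / 2) = 1 := by field_simp
      calc (1 : ℝ) = (-2 * p) * (-(1 / p) / 2) := h11.symm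
        _ ≤ (C * C' ^ p) * (-(1 / p) / 2) := by
            apply mul_le_mul_of_nonneg_right _ h10.le; linarith
    calc v = 1 * v := (one_mul v).symm
      _ ≤ (C * C' ^ p * (-(1 / p) / 2)) * v := mul_le_mul_of_nonneg_right h8 hv0.le
      _ = C * t ^ p * (-(1 / p) * (Real.log v / 2)) := by rw [h6, h7]
      _ ≤ C * t ^ p * (-Real.log t) := h5
  have hch : C * t ^ p * (-Real.log t) < q x := by
    have hxp : t ^ p ≤ x ^ p := Real.rpow_le_rpow_of_nonpos hx hcon.le hp.le
    have hlx : Real.log x < Real.log t := Real.log_lt_log hx hcon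
    have hpos : 0 < C * t ^ p := mul_pos hC htppos
    have hlogxneg : Real.log x < 0 := Real.log_neg hx hx1
    have s1 : C * t ^ p * (-Real.log t) < C * t ^ p * (-Real.log x) :=
      mul_lt_mul_of_pos_left (by linarith) hpos
    have s2 : C * t ^ p * (-Real.log x) ≤ C * x ^ p * (-Real.log x) := by
      apply mul_le_mul_of_nonneg_right _ (by linarith : (0 : ℝ) ≤ -Real.log x)
      exact mul_le_mul_of_nonneg_left hxp hC.le
    exact s1.trans_le (s2.trans hbx)
  linarith

/-- If `γ > 1` and the non-increasing boundary function `q` satisfies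
`q(x) ≥ C x^{(1-γ)/2}|log x|` near `0`, then the generalized inverse satisfies
`q⟵(v) ≥ C'(v/log v)^{2/(1-γ)}` for large `v`, and consequently
`∫_{y₀}^∞ (q⟵(v))^{1-γ} v^{-3} dv < ∞` for every `y₀ > 1`. -/
theorem generalized_inverse_lower_bound
    (γ : ℝ) (hγ : 1 < γ)
    (q : ℝ → ℝ) (hq : AntitoneOn q (Set.Ioi 0)) (hqpos : ∀ x : ℝ, 0 < x → 0 < q x)
    (hQ2 : ∃ C : ℝ, 0 < C ∧ ∃ δ ∈ Set.Ioo (0 : ℝ) 1, ∀ x ∈ Set.Ioo (0 : ℝ) δ,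
      C * x ^ ((1 - γ) / 2) * |Real.log x| ≤ q x) :
    (∃ C' : ℝ, 0 < C' ∧ ∃ v₀ : ℝ, 1 < v₀ ∧ ∀ v : ℝ, v₀ ≤ v →
      C' * (v / Real.log v) ^ (2 / (1 - γ)) ≤ sInf {x : ℝ | 0 < x ∧ q x ≤ v}) ∧
    ∀ y₀ : ℝ, 1 < y₀ →
      (∫⁻ v in Set.Ioi y₀,
        ENNReal.ofReal ((sInf {x : ℝ | 0 < x ∧ q x ≤ v}) ^ (1 - γ) * v ^ (-(3 : ℝ)))) < ⊤ := by
  obtain ⟨C', hC', v₀, hv₀, hkey⟩ := key_lower_bound γ hγ q hQ2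
  constructor
  · refine ⟨C', hC', v₀, hv₀, fun v hv => ?_⟩
    obtain ⟨hpos, ⟨y, hy1, hy2⟩, hlb⟩ := hkey v hv
    exact le_csInf ⟨y, hy1, hy2⟩ fun x hx => hlb x hx.1 hx.2
  · intro y₀ hy₀
    set v₁ := max v₀ y₀ with hv₁def
    have hv₁v₀ : v₀ ≤ v₁ := le_max_left _ _
    have hy₀v₁ : y₀ ≤ v₁ := le_max_right _ _
    have h1v₁ : 1 < v₁ := lt_of_lt_of_le hv₀ hv₁v₀
    obtain ⟨hβpos, hne₁, hlb₁⟩ := hkey v₁ hv₁v₀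
    set β := C' * (v₁ / Real.log v₁) ^ (2 / (1 - γ)) with hβdef
    set M := β ^ (1 - γ) * y₀ ^ (-(3 : ℝ)) with hMdef
    have hy₀0 : (0 : ℝ) < y₀ := by linarith
    have hMpos : 0 < M :=
      mul_pos (Real.rpow_pos_of_pos hβpos _) (Real.rpow_pos_of_pos hy₀0 _)
    have hsplit : Ioi y₀ = Ioc y₀ v₁ ∪ Ioi v₁ := (Ioc_union_Ioi_eq_Ioi hy₀v₁).symm
    rw [hsplit, lintegral_union measurableSet_Ioi Ioc_disjoint_Ioi_same]
    refine ENNReal.add_lt_top.2 ⟨?_, ?_⟩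
    · -- bounded piece
      have hbound : ∀ v ∈ Ioc y₀ v₁,
          ENNReal.ofReal ((sInf {x : ℝ | 0 < x ∧ q x ≤ v}) ^ (1 - γ) * v ^ (-(3 : ℝ))) ≤
            ENNReal.ofReal M := by
        intro v hv
        apply ENNReal.ofReal_le_ofReal
        have hv0 : 0 < v := lt_trans hy₀0 hv.1
        by_cases hS : ({x : ℝ | 0 < x ∧ q x ≤ v}).Nonempty
        · have hinf : β ≤ sInf {x : ℝ | 0 < x ∧ q x ≤ v} :=
            le_csInf hS fun x hx => hlb₁ x hx.1 (hx.2.trans hv.2)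
          have h1 : (sInf {x : ℝ | 0 < x ∧ q x ≤ v}) ^ (1 - γ) ≤ β ^ (1 - γ) :=
            Real.rpow_le_rpow_of_nonpos hβpos hinf (by linarith)
          have h2 : v ^ (-(3 : ℝ)) ≤ y₀ ^ (-(3 : ℝ)) :=
            Real.rpow_le_rpow_of_nonpos hy₀0 hv.1.le (by norm_num)
          exact mul_le_mul h1 h2 (Real.rpow_nonneg hv0.le _)
            (Real.rpow_nonneg (by positivity) _)
        · have he : sInf {x : ℝ | 0 < x ∧ q x ≤ v} = 0 := by
            rw [Set.not_nonempty_iff_eq_empty.1 hS, Real.sInf_empty]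
          rw [he, Real.zero_rpow (by intro h; rw [sub_eq_zero] at h; linarith), zero_mul]
          exact hMpos.le
      calc (∫⁻ v in Ioc y₀ v₁,
            ENNReal.ofReal ((sInf {x : ℝ | 0 < x ∧ q x ≤ v}) ^ (1 - γ) * v ^ (-(3 : ℝ))))
          ≤ ∫⁻ _ in Ioc y₀ v₁, ENNReal.ofReal M := setLIntegral_mono' measurableSet_Ioc hbound
        _ = ENNReal.ofReal M * volume (Ioc y₀ v₁) := setLIntegral_const _ _
        _ < ⊤ := ENNReal.mul_lt_top ENNReal.ofReal_lt_top measure_Ioc_lt_top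
    · -- tail piece
      set g' : ℝ → ℝ := fun v => v⁻¹ / (Real.log v) ^ 2 with hg'def
      have hintg' : IntegrableOn g' (Ioi v₁) := by
        apply integrableOn_Ioi_deriv_of_nonneg
          (g := fun v => -(Real.log v)⁻¹) (l := 0)
        · exact (((Real.continuousAt_log (by positivity : (0:ℝ) < v₁).ne').inv₀
            (Real.log_pos h1v₁).ne').neg).continuousWithinAt
        · intro x hx
          have hx1 : 1 < x := lt_trans h1v₁ hx
          have hx0 : x ≠ 0 := by positivity
          have hlx : Real.log x ≠ 0 := (Real.log_pos hx1).ne'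
          have h := ((Real.hasDerivAt_log hx0).inv hlx).neg
          rw [neg_div, neg_neg] at h
          exact h
        · intro x hx
          have hx1 : 1 < x := lt_trans h1v₁ hx
          have hlx : 0 < Real.log x := Real.log_pos hx1
          have hx0 : 0 < x := by linarith
          positivity
        · have h := Real.tendsto_log_atTop.inv_tendsto_atTop
          have h2 := h.neg
          rw [neg_zero] at h2
          exact h2.congr fun x => by simp
      have hint : IntegrableOn (fun v => C' ^ (1 - γ) * g' v) (Ioi v₁) := hintg'.const_mul _
      have hptwise : ∀ v ∈ Ioi v₁,
          ENNReal.ofReal ((sInf {x : ℝ | 0 < x ∧ q x ≤ v}) ^ (1 - γ) * v ^ (-(3 : ℝ))) ≤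
            ‖C' ^ (1 - γ) * g' v‖ₑ := by
        intro v hv
        have hv₁v : v₁ < v := hv
        have hv1 : 1 < v := lt_trans h1v₁ hv₁v
        have hv0 : 0 < v := by linarith
        have hLv : 0 < Real.log v := Real.log_pos hv1
        obtain ⟨htv, hnev, hlbv⟩ := hkey v (le_trans hv₁v₀ hv₁v.le)
        set tv := C' * (v / Real.log v) ^ (2 / (1 - γ)) with htvdef
        have hinf : tv ≤ sInf {x : ℝ | 0 < x ∧ q x ≤ v} :=
          le_csInf hnev fun x hx => hlbv x hx.1 hx.2
        have h1 : (sInf {x : ℝ | 0 < x ∧ q x ≤ v}) ^ (1 - γ) ≤ tv ^ (1 - γ) :=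
          Real.rpow_le_rpow_of_nonpos htv hinf (by linarith)
        have hXv : 0 < v / Real.log v := div_pos hv0 hLv
        have h1γ : (1 : ℝ) - γ ≠ 0 := by intro h; rw [sub_eq_zero] at h; linarith
        have e1 : tv ^ (1 - γ) = C' ^ (1 - γ) * (v / Real.log v) ^ (2 : ℝ) := by
          rw [htvdef, Real.mul_rpow hC'.le (Real.rpow_nonneg hXv.le _),
            ← Real.rpow_mul hXv.le, div_mul_cancel₀ _ h1γ]
        have e4 : (v / Real.log v) ^ (2 : ℝ) * v ^ (-(3 : ℝ)) = g' v := by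
          have a1 : (v / Real.log v) ^ (2 : ℝ) = (v / Real.log v) ^ (2 : ℕ) := by
            rw [← Real.rpow_natCast (v / Real.log v) 2]; norm_num
          have a2 : v ^ (-(3 : ℝ)) = (v ^ (3 : ℕ))⁻¹ := by
            rw [← Real.rpow_natCast v 3, ← Real.rpow_neg hv0.le]; norm_num
          rw [a1, a2, hg'def]
          field_simp
        have hreal : (sInf {x : ℝ | 0 < x ∧ q x ≤ v}) ^ (1 - γ) * v ^ (-(3 : ℝ)) ≤
            C' ^ (1 - γ) * g' v := by
          calc (sInf {x : ℝ | 0 < x ∧ q x ≤ v}) ^ (1 - γ) * v ^ (-(3 : ℝ))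
              ≤ tv ^ (1 - γ) * v ^ (-(3 : ℝ)) :=
                mul_le_mul_of_nonneg_right h1 (Real.rpow_nonneg hv0.le _)
            _ = C' ^ (1 - γ) * ((v / Real.log v) ^ (2 : ℝ) * v ^ (-(3 : ℝ))) := by
                rw [e1]; ring
            _ = C' ^ (1 - γ) * g' v := by rw [e4]
        exact (ENNReal.ofReal_le_ofReal hreal).trans (Real.ofReal_le_enorm _)
      calc (∫⁻ v in Ioi v₁,
            ENNReal.ofReal ((sInf {x : ℝ | 0 < x ∧ q x ≤ v}) ^ (1 - γ) * v ^ (-(3 : ℝ))))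
          ≤ ∫⁻ v in Ioi v₁, ‖C' ^ (1 - γ) * g' v‖ₑ :=
            setLIntegral_mono' measurableSet_Ioi hptwise
        _ < ⊤ := hint.hasFiniteIntegral
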